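/- arXiv:1001.1568 — 3 statements merged into one kernel-verified Lean document; each statement's English description precedes it below -/
import Mathlib

section
/- Let A(t) be a continuous T-periodic 2×2 real matrix function and suppose the monodromy matrix X(T) of the system u' = A(t)u (with X(0) = I) has +1 as a characteristic multiplier of algebraic multiplicity 2. Let ũ be a T-periodic solution of the system with ũ₁(0) = 0 and ũ₂(0) ≠ 0, and let û be any solution with û₁(0) ≠ 0. Then for all t ∈ ℝ, û(t + T) = û(t) + ((û₂(T) − û₂(0))/ũ₂(0)) · ũ(t). -/
open Matrix Set

noncomputable def matCLM (M : Matrix (Fin 2) (Fin 2) ℝ) : (Fin 2 → ℝ) →L[ℝ] (Fin 2 → ℝ) :=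
  LinearMap.toContinuousLinearMap (Matrix.toLin' M)

lemma matCLM_apply (M : Matrix (Fin 2) (Fin 2) ℝ) (v : Fin 2 → ℝ) : matCLM M v = M *ᵥ v := by
  simp [matCLM, Matrix.toLin'_apply]

lemma matCLM_cont : Continuous matCLM := by
  have : IsLinearMap ℝ matCLM := by
    constructor <;> intros <;> ext v <;>
      simp [matCLM_apply, Matrix.add_mulVec, Matrix.smul_mulVec]
  exact (this.mk' matCLM).continuous_of_finiteDimensional

lemma sol_unique (A : ℝ → Matrix (Fin 2) (Fin 2) ℝ) (hAcont : Continuous A)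
    (f g : ℝ → Fin 2 → ℝ)
    (hf : ∀ t, HasDerivAt f ((A t) *ᵥ (f t)) t)
    (hg : ∀ t, HasDerivAt g ((A t) *ᵥ (g t)) t)
    (h0 : f 0 = g 0) : ∀ t, f t = g t := by
  intro t
  set b : ℝ := |t| + 1 with hb
  have hbpos : 0 < b := by positivity
  set proj : ℝ → ℝ := fun s => max (-b) (min b s) with hproj
  have hprojmem : ∀ s, proj s ∈ Icc (-b) b := by
    intro s
    constructor
    · exact le_max_left _ _
    · exact max_le (by linarith) (min_le_left _ _)
  have hprojeq : ∀ s ∈ Ioo (-b) b, proj s = s := by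
    intro s hs
    simp only [hproj]
    rw [min_eq_right hs.2.le, max_eq_right hs.1.le]
  set v : ℝ → (Fin 2 → ℝ) → (Fin 2 → ℝ) := fun s x => (A (proj s)) *ᵥ x with hv
  -- bound
  have hcont : ContinuousOn (fun s => ‖matCLM (A s)‖) (Icc (-b) b) :=
    ((matCLM_cont.comp hAcont).norm).continuousOn
  obtain ⟨C, hC⟩ := (isCompact_Icc (a := -b) (b := b)).exists_bound_of_continuousOn hcont
  set K : NNReal := ⟨max C 0, le_max_right _ _⟩ with hK
  have hlip : ∀ s, LipschitzOnWith K (v s) univ := by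
    intro s
    apply LipschitzWith.lipschitzOnWith
    have h1 : LipschitzWith ‖matCLM (A (proj s))‖₊ (v s) := by
      have := (matCLM (A (proj s))).lipschitz
      intro x y
      simpa [hv, matCLM_apply] using this x y
    apply h1.weaken
    have h2 : ‖matCLM (A (proj s))‖ ≤ C := by
      have := hC (proj s) (hprojmem s)
      rwa [Real.norm_eq_abs, abs_of_nonneg (norm_nonneg _)] at this
    rw [← NNReal.coe_le_coe]
    exact le_trans (by simpa using h2) (le_max_left _ _)
  have key : EqOn f g (Icc (-b) b) := by
    apply ODE_solution_unique_of_mem_Icc (fun s _ => hlip s)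
      (t₀ := 0) (ht := ⟨by linarith, hbpos⟩)
      (hf := fun s _ => (hf s).continuousAt.continuousWithinAt)
      (hg := fun s _ => (hg s).continuousAt.continuousWithinAt)
      (hfs := fun _ _ => mem_univ _) (hgs := fun _ _ => mem_univ _) (heq := h0)
    · intro s hs
      show HasDerivAt f (A (proj s) *ᵥ f s) s
      rw [hprojeq s hs]
      exact hf s
    · intro s hs
      show HasDerivAt g (A (proj s) *ᵥ g s) s
      rw [hprojeq s hs]
      exact hg s
  have h1 : -b ≤ t := by have := neg_abs_le t; linarith
  have h2 : t ≤ b := by have := le_abs_self t; linarith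
  exact key ⟨h1, h2⟩

/-- Lemma 3 (Lemma 4.2 of [tmms], generalized): if the linear `T`-periodic planar system
`u' = A(t) u` has characteristic multiplier `+1` of algebraic multiplicity 2 (i.e. the
monodromy matrix `X T` has trace 2 and determinant 1), `ũ` is a `T`-periodic solution with
`ũ₁(0) = 0`, `ũ₂(0) ≠ 0`, and `û` is any solution with `û₁(0) ≠ 0`, then
`û(t + T) = û(t) + ((û₂(T) − û₂(0))/ũ₂(0)) • ũ(t)` for all `t`. -/
theorem stmt0
    (T : ℝ) (hT : 0 < T)
    (A : ℝ → Matrix (Fin 2) (Fin 2) ℝ) (hAcont : Continuous A)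
    (hAper : ∀ t, A (t + T) = A t)
    (X : ℝ → Matrix (Fin 2) (Fin 2) ℝ)
    (hX0 : X 0 = 1)
    (hX : ∀ (v : Fin 2 → ℝ) (t : ℝ),
      HasDerivAt (fun s => (X s) *ᵥ v) ((A t) *ᵥ ((X t) *ᵥ v)) t)
    (hmult : (X T).trace = 2 ∧ (X T).det = 1)
    (ut : ℝ → Fin 2 → ℝ)
    (hut : ∀ t, HasDerivAt ut ((A t) *ᵥ (ut t)) t)
    (hutper : ∀ t, ut (t + T) = ut t)
    (hut1 : ut 0 0 = 0) (hut2 : ut 0 1 ≠ 0)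
    (hu : ℝ → Fin 2 → ℝ)
    (hhu : ∀ t, HasDerivAt hu ((A t) *ᵥ (hu t)) t)
    (hhu1 : hu 0 0 ≠ 0) :
    ∀ t : ℝ, hu (t + T) = hu t + ((hu T 1 - hu 0 1) / ut 0 1) • ut t := by
  -- representation of solutions via X
  have rep : ∀ (w : ℝ → Fin 2 → ℝ), (∀ t, HasDerivAt w ((A t) *ᵥ (w t)) t) →
      ∀ t, w t = X t *ᵥ w 0 := by
    intro w hw
    apply sol_unique A hAcont w (fun s => X s *ᵥ w 0) hw
    · intro s
      exact hX (w 0) s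
    · simp [hX0]
  set M := X T with hM
  have hutT : ut T = ut 0 := by have := hutper 0; simpa using this
  have hMut : M *ᵥ ut 0 = ut 0 := by rw [← rep ut hut T, hutT]
  have hhuT : hu T = M *ᵥ hu 0 := rep hu hhu T
  -- entries of M
  have hM01 : M 0 1 = 0 := by
    have := congrFun hMut 0
    simp [Matrix.mulVec, dotProduct, Fin.sum_univ_two, hut1] at this
    exact this.resolve_right hut2
  have hM11 : M 1 1 = 1 := by
    have := congrFun hMut 1
    simp [Matrix.mulVec, dotProduct, Fin.sum_univ_two, hut1] at this
    field_simp at this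
    exact this
  have hM00 : M 0 0 = 1 := by
    have htr := hmult.1
    rw [Matrix.trace_fin_two] at htr
    rw [hM11] at htr; linarith
  -- c
  set c : ℝ := (hu T 1 - hu 0 1) / ut 0 1 with hc
  have hcb : c * ut 0 1 = M 1 0 * hu 0 0 := by
    have h1 : hu T 1 = M 1 0 * hu 0 0 + M 1 1 * hu 0 1 := by
      rw [hhuT]; simp [Matrix.mulVec, dotProduct, Fin.sum_univ_two]
    rw [hc, div_mul_cancel₀ _ hut2, h1, hM11]; ring
  have keyvec : M *ᵥ hu 0 = hu 0 + c • ut 0 := by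
    funext i
    fin_cases i
    · show (M *ᵥ hu 0) 0 = (hu 0 + c • ut 0) 0
      simp [Matrix.mulVec, dotProduct, Fin.sum_univ_two, hM00, hM01, hut1]
    · show (M *ᵥ hu 0) 1 = (hu 0 + c • ut 0) 1
      simp only [Matrix.mulVec, dotProduct, Fin.sum_univ_two, hM11, Pi.add_apply,
        Pi.smul_apply, smul_eq_mul]
      linarith [hcb]
  -- final
  intro t
  have := sol_unique A hAcont (fun s => hu (s + T)) (fun s => hu s + c • ut s) ?_ ?_ ?_ t
  · exact this
  · intro s
    have h1 : HasDerivAt (fun r => hu (r + T)) ((1:ℝ) • ((A (s + T)) *ᵥ (hu (s + T)))) s := by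
      exact HasDerivAt.scomp s (hhu (s + T)) ((hasDerivAt_id s).add_const T)
    simpa [hAper] using h1
  · intro s
    have h1 : HasDerivAt (fun r => hu r + c • ut r)
        ((A s) *ᵥ (hu s) + c • ((A s) *ᵥ (ut s))) s := ((hhu s).add ((hut s).const_smul c))
    convert h1 using 1
    rw [Matrix.mulVec_add, Matrix.mulVec_smul]
  · simp only [zero_add]
    rw [hhuT, keyvec]
end

section
/- Let f ∈ C¹(ℝ², ℝ²) and let x₀ be a nondegenerate T-periodic cycle of the planar Hamiltonian system x' = f(x) (where f = J∇H so that div f ≡ 0). Then every T-periodic solution z̃ of the adjoint linearized system z' = −(f'(x₀(t)))*z satisfies ⟨x₀'(t), z̃(t)⟩ = 0 for all t ∈ ℝ. -/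
open Matrix

/-- The Wronskian of two solutions of a traceless planar linear system is constant. -/
lemma wr_const (A : ℝ → Matrix (Fin 2) (Fin 2) ℝ) (hA : ∀ t, (A t).trace = 0)
    (a b : ℝ → Fin 2 → ℝ)
    (ha : ∀ t, HasDerivAt a ((A t) *ᵥ a t) t) (hb : ∀ t, HasDerivAt b ((A t) *ᵥ b t) t)
    (s t : ℝ) :
    a s 0 * b s 1 - a s 1 * b s 0 = a t 0 * b t 1 - a t 1 * b t 0 := by
  have key : ∀ u : ℝ, HasDerivAt (fun u => a u 0 * b u 1 - a u 1 * b u 0) 0 u := by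
    intro u
    have ha0 := hasDerivAt_pi.1 (ha u) 0
    have ha1 := hasDerivAt_pi.1 (ha u) 1
    have hb0 := hasDerivAt_pi.1 (hb u) 0
    have hb1 := hasDerivAt_pi.1 (hb u) 1
    have htr := hA u
    simp only [Matrix.trace, Matrix.diag, Fin.sum_univ_two] at htr
    have h : HasDerivAt (fun u => a u 0 * b u 1 - a u 1 * b u 0) _ u := (ha0.mul hb1).sub (ha1.mul hb0)
    convert h using 1
    simp only [Matrix.mulVec_apply_eq_sum, dotProduct, Fin.sum_univ_two]
    linear_combination (- a u 0 * b u 1 + a u 1 * b u 0) * htr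
  have hdiff : Differentiable ℝ (fun u => a u 0 * b u 1 - a u 1 * b u 0) :=
    fun u => (key u).differentiableAt
  exact is_const_of_deriv_eq_zero hdiff (fun u => (key u).deriv) s t

/-- Lemma 5: for a nondegenerate `T`-periodic cycle `x₀` of a planar Hamiltonian
system `x' = f(x)` (so `div f ≡ 0`, i.e. the Jacobian is traceless), every `T`-periodic
solution `z̃` of the adjoint linearized system `z' = −(f'(x₀(t)))ᵀ z` satisfies
`⟨x₀'(t), z̃(t)⟩ = 0` for all `t`. -/
theorem stmt2
    (T : ℝ) (hT : 0 < T)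
    (f : (Fin 2 → ℝ) → (Fin 2 → ℝ)) (hf : ContDiff ℝ 1 f)
    (J : (Fin 2 → ℝ) → Matrix (Fin 2) (Fin 2) ℝ)
    (hJ : ∀ x v, (J x) *ᵥ v = fderiv ℝ f x v)
    (hHam : ∀ x, (J x).trace = 0)
    (x₀ : ℝ → Fin 2 → ℝ)
    (hx₀ : ∀ t, HasDerivAt x₀ (f (x₀ t)) t)
    (hx₀per : ∀ t, x₀ (t + T) = x₀ t)
    (hnondeg : ∃ y : ℝ → Fin 2 → ℝ,
      (∀ t, HasDerivAt y ((J (x₀ t)) *ᵥ (y t)) t) ∧ ∃ t, y (t + T) ≠ y t)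
    (z : ℝ → Fin 2 → ℝ)
    (hz : ∀ t, HasDerivAt z (-((J (x₀ t))ᵀ *ᵥ (z t))) t)
    (hzper : ∀ t, z (t + T) = z t) :
    ∀ t : ℝ, (f (x₀ t)) ⬝ᵥ (z t) = 0 := by
  set A : ℝ → Matrix (Fin 2) (Fin 2) ℝ := fun t => J (x₀ t) with hA
  -- v := f ∘ x₀ solves the linearized system
  set v : ℝ → Fin 2 → ℝ := fun t => f (x₀ t) with hvdef
  have hv : ∀ t, HasDerivAt v ((A t) *ᵥ v t) t := by
    intro t
    have hd : HasFDerivAt f (fderiv ℝ f (x₀ t)) (x₀ t) :=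
      ((hf.differentiable one_ne_zero) (x₀ t)).hasFDerivAt
    have h := hd.comp_hasDerivAt t (hx₀ t)
    have : (A t) *ᵥ v t = fderiv ℝ f (x₀ t) (f (x₀ t)) := hJ (x₀ t) (f (x₀ t))
    rw [this]
    exact h
  -- w := R⁻¹ z solves the linearized system
  set w : ℝ → Fin 2 → ℝ := fun t => ![z t 1, - z t 0] with hwdef
  have hw : ∀ t, HasDerivAt w ((A t) *ᵥ w t) t := by
    intro t
    have hz0 := hasDerivAt_pi.1 (hz t) 0
    have hz1 := hasDerivAt_pi.1 (hz t) 1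
    have htr := hHam (x₀ t)
    simp only [Matrix.trace, Matrix.diag, Fin.sum_univ_two] at htr
    refine hasDerivAt_pi.2 ?_
    intro i
    fin_cases i
    · simp only [hwdef, Matrix.cons_val_zero, Matrix.cons_val_one, Matrix.head_cons, Fin.zero_eta, Fin.mk_one]
      convert hz1 using 1
      simp only [hA, Matrix.mulVec_apply_eq_sum, dotProduct, Matrix.transpose_apply, Fin.sum_univ_two,
        Pi.neg_apply, Matrix.cons_val_zero, Matrix.cons_val_one, Matrix.head_cons,
        Fin.mk_zero, Fin.mk_one]
      linear_combination (z t 1) * htr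
    · simp only [hwdef, Matrix.cons_val_zero, Matrix.cons_val_one, Matrix.head_cons, Fin.zero_eta, Fin.mk_one]
      convert hz0.fun_neg using 1
      simp only [hA, Matrix.mulVec_apply_eq_sum, dotProduct, Matrix.transpose_apply, Fin.sum_univ_two,
        Pi.neg_apply, Matrix.cons_val_zero, Matrix.cons_val_one, Matrix.head_cons,
        Fin.mk_zero, Fin.mk_one]
      linear_combination (- z t 0) * htr
  have htrA : ∀ t, (A t).trace = 0 := fun t => hHam (x₀ t)
  -- periodicity of v and w
  have hvper : ∀ t, v (t + T) = v t := fun t => by simp [hvdef, hx₀per t]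
  have hwper : ∀ t, w (t + T) = w t := fun t => by simp [hwdef, hzper t]
  intro t
  by_contra hne
  -- the Wronskian det(v,w) is a nonzero constant
  have hc : v t 0 * w t 1 - v t 1 * w t 0 ≠ 0 := by
    simp only [hwdef, Matrix.cons_val_zero, Matrix.cons_val_one, Matrix.head_cons]
    intro h
    apply hne
    simp only [dotProduct, Fin.sum_univ_two, hvdef] at *
    linarith
  obtain ⟨y, hy, t₁, hy₁⟩ := hnondeg
  apply hy₁
  funext i
  have Hvw := fun s => wr_const A htrA v w hv hw s t
  have Hyv := fun s => wr_const A htrA y v hy hv s t₁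
  have Hyw := fun s => wr_const A htrA y w hy hw s t₁
  -- Cramer: det(v,w)·y = det(y,w)·v − det(y,v)·w  pointwise (polynomial identity)
  have cramer : ∀ s : ℝ, ∀ j : Fin 2,
      (v s 0 * w s 1 - v s 1 * w s 0) * y s j =
      (y s 0 * w s 1 - y s 1 * w s 0) * v s j - (y s 0 * v s 1 - y s 1 * v s 0) * w s j := by
    intro s j
    fin_cases j <;> simp only [Fin.mk_zero, Fin.mk_one] <;> ring
  have c0 : v t 0 * w t 1 - v t 1 * w t 0 ≠ 0 := hc
  have key : ∀ s : ℝ, (v t 0 * w t 1 - v t 1 * w t 0) * y s i =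
      (y t₁ 0 * w t₁ 1 - y t₁ 1 * w t₁ 0) * v s i - (y t₁ 0 * v t₁ 1 - y t₁ 1 * v t₁ 0) * w s i := by
    intro s
    have := cramer s i
    rw [Hvw s, Hyw s, Hyv s] at this
    exact this
  have e1 := key (t₁ + T)
  have e2 := key t₁
  rw [hvper t₁, hwper t₁] at e1
  have : (v t 0 * w t 1 - v t 1 * w t 0) * y (t₁ + T) i =
      (v t 0 * w t 1 - v t 1 * w t 0) * y t₁ i := by rw [e1, e2]
  exact mul_left_cancel₀ c0 this
end

section
/- Let f ∈ C¹(ℝ², ℝ²) and x₀ a nondegenerate T-periodic cycle of x' = f(x). Define S(v) = Ω(T, 0, x₀(0) + A₁v), where Ω(·, t₀, ξ) is the solution of x' = f(x) with Ω(t₀, t₀, ξ) = ξ, and A₁ ∈ ℝ² is a vector such that the 2×2 matrix (x₀'(0), A₁) is nonsingular. Then x₀'(0) ∉ S'(0)(ℝ), i.e., the derivative S'(0) = Ω'_ξ(T, 0, x₀(0))A₁ is not a scalar multiple of x₀'(0). -/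
open Matrix

/-- Lemma 1 (transversality of the section `S` to the cycle): if `x₀` is a nondegenerate
`T`-periodic cycle of `x' = f(x)`, `Y` is the fundamental matrix of the linearized system
along `x₀` with `Y 0 = 1` (so `Y T = Ω'_ξ(T,0,x₀(0))` is the monodromy matrix), and `A₁`
is such that the matrix with columns `x₀'(0) = f(x₀(0))` and `A₁` is nonsingular, then
`x₀'(0)` is not in the range of `S'(0) : ℝ → ℝ²`, `v ↦ v • (Y T *ᵥ A₁)`. -/
theorem stmt4
    (T : ℝ) (hT : 0 < T)
    (f : (Fin 2 → ℝ) → (Fin 2 → ℝ)) (hf : ContDiff ℝ 1 f)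
    (J : (Fin 2 → ℝ) → Matrix (Fin 2) (Fin 2) ℝ)
    (hJ : ∀ x v, (J x) *ᵥ v = fderiv ℝ f x v)
    (x₀ : ℝ → Fin 2 → ℝ)
    (hx₀ : ∀ t, HasDerivAt x₀ (f (x₀ t)) t)
    (hx₀per : ∀ t, x₀ (t + T) = x₀ t)
    (hnondeg : ∃ y : ℝ → Fin 2 → ℝ,
      (∀ t, HasDerivAt y ((J (x₀ t)) *ᵥ (y t)) t) ∧ ∃ t, y (t + T) ≠ y t)
    (Y : ℝ → Matrix (Fin 2) (Fin 2) ℝ)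
    (hY0 : Y 0 = 1)
    (hY : ∀ (v : Fin 2 → ℝ) (t : ℝ),
      HasDerivAt (fun s => (Y s) *ᵥ v) ((J (x₀ t)) *ᵥ ((Y t) *ᵥ v)) t)
    (A₁ : Fin 2 → ℝ)
    (hA₁ : (Matrix.of ![f (x₀ 0), A₁])ᵀ.det ≠ 0) :
    ∀ v : ℝ, v • ((Y T) *ᵥ A₁) ≠ f (x₀ 0) := by
  intro v hveq
  -- the clamped time
  set c : ℝ → ℝ := fun t => max 0 (min t T) with hc
  have hcmem : ∀ t, c t ∈ Set.Icc 0 T :=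
    fun t => ⟨le_max_left _ _, max_le hT.le (min_le_right _ _)⟩
  have hceq : ∀ t ∈ Set.Icc 0 T, c t = t := by
    intro t ht
    simp only [hc]
    rw [min_eq_left ht.2, max_eq_right ht.1]
  have hx₀cont : Continuous x₀ :=
    continuous_iff_continuousAt.mpr fun t => (hx₀ t).continuousAt
  -- a Lipschitz bound for the linearized field on [0, T]
  obtain ⟨C, hC⟩ := (isCompact_Icc (a := (0:ℝ)) (b := T)).exists_bound_of_continuousOn
    (((hf.continuous_fderiv one_ne_zero).comp hx₀cont).continuousOn)
  set K : NNReal := ⟨max C 0, le_max_right _ _⟩ with hK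
  set vf : ℝ → (Fin 2 → ℝ) → (Fin 2 → ℝ) := fun t => fderiv ℝ f (x₀ (c t)) with hvf
  have hlip : ∀ t, LipschitzWith K (vf t) := by
    intro t
    refine (fderiv ℝ f (x₀ (c t))).lipschitz.weaken ?_
    rw [← NNReal.coe_le_coe]
    exact le_trans (hC _ (hcmem t)) (le_max_left _ _)
  have hmatch : ∀ t ∈ Set.Icc 0 T, ∀ y, vf t y = J (x₀ t) *ᵥ y := by
    intro t ht y
    show (fderiv ℝ f (x₀ (c t))) y = J (x₀ t) *ᵥ y
    rw [hceq t ht, hJ]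
  -- the monodromy matrix fixes p := f (x₀ 0)
  have hxT : x₀ T = x₀ 0 := by simpa using hx₀per 0
  have key1 : Y T *ᵥ f (x₀ 0) = f (x₀ 0) := by
    have huniq : Set.EqOn (fun t => Y t *ᵥ f (x₀ 0)) (fun t => f (x₀ t)) (Set.Icc 0 T) := by
      apply ODE_solution_unique (v := vf) hlip
      · exact (continuous_iff_continuousAt.mpr fun t =>
          (hY (f (x₀ 0)) t).continuousAt).continuousOn
      · intro t ht
        have h1 := (hY (f (x₀ 0)) t).hasDerivWithinAt (s := Set.Ici t)
        rwa [← hmatch t (Set.Ico_subset_Icc_self ht)] at h1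
      · exact (hf.continuous.comp hx₀cont).continuousOn
      · intro t ht
        have hdf : HasDerivAt (fun s => f (x₀ s)) (fderiv ℝ f (x₀ t) (f (x₀ t))) t :=
          ((hf.differentiable one_ne_zero) (x₀ t)).hasFDerivAt.comp_hasDerivAt t (hx₀ t)
        have h2 := hdf.hasDerivWithinAt (s := Set.Ici t)
        rwa [← hJ, ← hmatch t (Set.Ico_subset_Icc_self ht)] at h2
      · simp [hY0, Matrix.one_mulVec]
    have := huniq (Set.right_mem_Icc.mpr hT.le)
    simp only at this
    rw [this, hxT]
  -- injectivity of the monodromy matrix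
  have hinj : ∀ w : Fin 2 → ℝ, Y T *ᵥ w = 0 → w = 0 := by
    intro w hw
    have huniq : Set.EqOn (fun t => Y t *ᵥ w) (fun _ => (0 : Fin 2 → ℝ)) (Set.Icc 0 T) := by
      apply ODE_solution_unique_of_mem_Icc_left (v := vf) (s := fun _ => Set.univ)
        (fun t _ => (hlip t).lipschitzOnWith)
      · exact (continuous_iff_continuousAt.mpr fun t => (hY w t).continuousAt).continuousOn
      · intro t ht
        have h1 := (hY w t).hasDerivWithinAt (s := Set.Iic t)
        rwa [← hmatch t (Set.Ioc_subset_Icc_self ht)] at h1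
      · exact fun _ _ => trivial
      · exact continuousOn_const
      · intro t ht
        have h0 : vf t (0 : Fin 2 → ℝ) = 0 := (fderiv ℝ f (x₀ (c t))).map_zero
        rw [h0]
        exact hasDerivWithinAt_const _ _ _
      · exact fun _ _ => trivial
      · exact hw
    have := huniq (Set.left_mem_Icc.mpr hT.le)
    simp only [hY0, Matrix.one_mulVec] at this
    exact this
  -- conclude : v • A₁ = f (x₀ 0), contradicting the determinant hypothesis
  have h3 : v • A₁ = f (x₀ 0) := by
    have h2 : Y T *ᵥ (v • A₁ - f (x₀ 0)) = 0 := by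
      rw [Matrix.mulVec_sub, Matrix.mulVec_smul, hveq, key1, sub_self]
    exact sub_eq_zero.mp (hinj _ h2)
  apply hA₁
  rw [Matrix.det_transpose, Matrix.det_fin_two]
  have e0 : f (x₀ 0) = v • A₁ := h3.symm
  simp [Matrix.of_apply, e0, Pi.smul_apply]
  ring
end
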